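/- For every complementary pair of minors det(m), det(n) ∈ A₁, the element det(m) − (−1)^{δ(m)+δ(n)} det(n) lies in the kernel of φ_W; that is, the ideal Λ₁ is a subideal of I(X). -/

import Mathlib

open MvPolynomial

/-! Setup following "Rees algebras of ideals submaximally generated by quadrics".
`R = K[x_1, …, x_d]`, `I = (x_i x_j (i ≠ j), x_k^2 - x_d^2 (k ≠ d))`,
`W = K[w_{ij} : 1 ≤ i ≤ j ≤ d, (i,j) ≠ (d,d)]` with `w_{ij} = w_{ji}`, `w_{dd} = 0`,
`φ_W : W → R`, `w_{ij} ↦ g_{ij}`, `I(X) = ker φ_W`, and the candidate ideal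
`Λ = Λ₀ + Λ₁ + Λ₂` built from 2×2 minors of the symmetric matrix `M = (w_{ij})`. -/

/-- 1-based index set `{1, …, d}`. -/
abbrev Idx (d : ℕ) : Type := (Set.Icc 1 d : Set ℕ)

/-- Index set for the variables `w_{ij}`, `1 ≤ i ≤ j ≤ d`, `(i,j) ≠ (d,d)`. -/
abbrev SymIdx (d : ℕ) : Type :=
  {p : Idx d × Idx d // p.1 ≤ p.2 ∧ ¬(p.1.1 = d ∧ p.2.1 = d)}

/-- The entry `w_{ij}` of `M` as an element of `W`, with the conventions
`w_{ij} = w_{ji}` and `w_{dd} = 0`. -/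
noncomputable def wv (K : Type*) [Field K] (d : ℕ) (i j : Idx d) :
    MvPolynomial (SymIdx d) K :=
  if h : (min i j).1 = d ∧ (max i j).1 = d then 0
  else X (⟨(min i j, max i j), ⟨min_le_max, h⟩⟩ : SymIdx d)

/-- The last variable `x_d` of `R = K[x_1, …, x_d]`. -/
noncomputable def xd (K : Type*) [Field K] (d : ℕ) : MvPolynomial (Idx d) K :=
  if h : 1 ≤ d then X (⟨d, Set.mem_Icc.mpr ⟨h, le_rfl⟩⟩ : Idx d) else 0

/-- The quadrics `g_{ij} = x_i x_j` (for `i ≠ j`) and `g_{ii} = x_i ^ 2 - x_d ^ 2`. -/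
noncomputable def gq (K : Type*) [Field K] (d : ℕ) (i j : Idx d) : MvPolynomial (Idx d) K :=
  if i = j then X i ^ 2 - xd K d ^ 2 else X i * X j

/-- The `K`-algebra map `φ_W : W → R`, `w_{ij} ↦ g_{ij}`. -/
noncomputable def phiW (K : Type*) [Field K] (d : ℕ) :
    MvPolynomial (SymIdx d) K →ₐ[K] MvPolynomial (Idx d) K :=
  aeval (fun p : SymIdx d => gq K d p.1.1 p.1.2)

/-- `I(X) = ker φ_W`, the defining ideal of the special fiber ring `F(I)`. -/
noncomputable def IX (K : Type*) [Field K] (d : ℕ) : Ideal (MvPolynomial (SymIdx d) K) :=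
  RingHom.ker (phiW K d).toRingHom

/-- A `2 × 2` submatrix of the symmetric matrix `M = (w_{ij})`, recorded by its (ordered)
rows `r1 < r2` and columns `c1 < c2`. -/
structure Sub2 (d : ℕ) where
  r1 : Idx d
  r2 : Idx d
  c1 : Idx d
  c2 : Idx d
  hr : r1 < r2
  hc : c1 < c2

/-- The determinant of a `2 × 2` submatrix of `M`, i.e. the minor `[r1 r2 | c1 c2]`. -/
noncomputable def sdet (K : Type*) [Field K] (d : ℕ) (m : Sub2 d) :
    MvPolynomial (SymIdx d) K :=
  wv K d m.r1 m.c1 * wv K d m.r2 m.c2 - wv K d m.r1 m.c2 * wv K d m.r2 m.c1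

/-- The set of row indices of a `2 × 2` submatrix. -/
def Sub2.rows {d : ℕ} (m : Sub2 d) : Finset (Idx d) := {m.r1, m.r2}

/-- The set of column indices of a `2 × 2` submatrix. -/
def Sub2.cols {d : ℕ} (m : Sub2 d) : Finset (Idx d) := {m.c1, m.c2}

/-- `inA s m` says that the minor `det m` belongs to `A_s`: the row and column index
sets of `m` meet in exactly `s` indices (equivalently, `m` contains exactly `s`
diagonal entries of `M`). -/
def inA {d : ℕ} (s : ℕ) (m : Sub2 d) : Prop := (m.rows ∩ m.cols).card = s

/-- Two `2 × 2` submatrices of `M` are complementary: there is a `4 × 4` principal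
submatrix (with index set `S`, `|S| = 4`) containing both, in which they share no rows
and no columns. -/
def ComplSub2 {d : ℕ} (m n : Sub2 d) : Prop :=
  ∃ S : Finset (Idx d), S.card = 4 ∧ m.rows ∪ n.rows ⊆ S ∧ m.cols ∪ n.cols ⊆ S ∧
    Disjoint m.rows n.rows ∧ Disjoint m.cols n.cols

/-- `δ(m) = 0` if the diagonal entry of `M` appearing in `m` lies on the diagonal of `m`,
and `δ(m) = 1` if it lies on the antidiagonal (intended for minors in `A₁`). -/
def delta {d : ℕ} (m : Sub2 d) : ℕ := if m.r1 = m.c1 ∨ m.r2 = m.c2 then 0 else 1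

/-- `Λ₀`: the ideal generated by the minors in `A₀`. -/
noncomputable def Lam0 (K : Type*) [Field K] (d : ℕ) : Ideal (MvPolynomial (SymIdx d) K) :=
  Ideal.span {f | ∃ m : Sub2 d, inA 0 m ∧ f = sdet K d m}

/-- `Λ₁`: generated by `det m - (-1)^(δ m + δ n) * det n` over complementary pairs in `A₁`. -/
noncomputable def Lam1 (K : Type*) [Field K] (d : ℕ) : Ideal (MvPolynomial (SymIdx d) K) :=
  Ideal.span {f | ∃ m n : Sub2 d, inA 1 m ∧ inA 1 n ∧ ComplSub2 m n ∧
    f = sdet K d m - (-1 : MvPolynomial (SymIdx d) K) ^ (delta m + delta n) * sdet K d n}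

/-- `Λ₂`: generated by `(det m1 + det n1) - (det m2 + det n2)` over pairs of complementary
matrices (PCMs), all four lying in a common `4 × 4` principal submatrix. -/
noncomputable def Lam2 (K : Type*) [Field K] (d : ℕ) : Ideal (MvPolynomial (SymIdx d) K) :=
  Ideal.span {f | ∃ m1 n1 m2 n2 : Sub2 d, inA 2 m1 ∧ inA 2 n1 ∧ inA 2 m2 ∧ inA 2 n2 ∧
    ComplSub2 m1 n1 ∧ ComplSub2 m2 n2 ∧
    (∃ S : Finset (Idx d), S.card = 4 ∧
      m1.rows ∪ m1.cols ∪ n1.rows ∪ n1.cols ∪ m2.rows ∪ m2.cols ∪ n2.rows ∪ n2.cols ⊆ S) ∧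
    f = (sdet K d m1 + sdet K d n1) - (sdet K d m2 + sdet K d n2)}

/-- The candidate ideal `Λ = Λ₀ + Λ₁ + Λ₂`. -/
noncomputable def Lam (K : Type*) [Field K] (d : ℕ) : Ideal (MvPolynomial (SymIdx d) K) :=
  Lam0 K d + Lam1 K d + Lam2 K d

/-- The Hilbert function of an ideal `N ⊆ W` in degree `i`:
the `K`-dimension of the degree-`i` homogeneous component of `N`. -/
noncomputable def HFI (K : Type*) [Field K] (d : ℕ)
    (N : Ideal (MvPolynomial (SymIdx d) K)) (i : ℕ) : ℕ :=
  Module.finrank K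
    ↥(Submodule.restrictScalars K N ⊓ homogeneousSubmodule (SymIdx d) K i)

section Aux

variable {K : Type*} [Field K] {d : ℕ}

lemma gq_symm (i j : Idx d) : gq K d i j = gq K d j i := by
  unfold gq
  by_cases h : i = j
  · simp [h]
  · simp [h, Ne.symm h, mul_comm]

lemma gq_diag (i : Idx d) : gq K d i i = X i ^ 2 - xd K d ^ 2 := by simp [gq]

lemma gq_ne {i j : Idx d} (h : i ≠ j) : gq K d i j = X i * X j := by simp [gq, h]

lemma gq_dd (i : Idx d) (hi : i.1 = d) : gq K d i i = 0 := by
  have h1 : (1 : ℕ) ≤ d := le_trans i.2.1 i.2.2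
  have hx : xd K d = X i := by
    unfold xd; rw [dif_pos h1]; congr 1; exact Subtype.ext hi.symm
  simp [gq, hx]

lemma phi_wv (i j : Idx d) : phiW K d (wv K d i j) = gq K d i j := by
  unfold wv
  split_ifs with h
  · have hmin : ((min i j : Idx d) : ℕ) ≤ (i : ℕ) := Subtype.coe_le_coe.mpr (min_le_left i j)
    have hmin' : ((min i j : Idx d) : ℕ) ≤ (j : ℕ) := Subtype.coe_le_coe.mpr (min_le_right i j)
    have h1 := h.1
    have hi : (i : ℕ) = d := le_antisymm i.2.2 (by omega)
    have hj : (j : ℕ) = d := le_antisymm j.2.2 (by omega)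
    have hij : i = j := Subtype.ext (hi.trans hj.symm)
    rw [map_zero, hij, gq_dd j hj]
  · rw [phiW, aeval_X]
    rcases le_total i j with hle | hle
    · simp only [min_eq_left hle, max_eq_right hle]
    · simp only [min_eq_right hle, max_eq_left hle]
      exact gq_symm j i

lemma phi_sdet (m : Sub2 d) :
    phiW K d (sdet K d m) =
      gq K d m.r1 m.c1 * gq K d m.r2 m.c2 - gq K d m.r1 m.c2 * gq K d m.r2 m.c1 := by
  simp [sdet, phi_wv]

lemma A1_struct (m : Sub2 d) (h : inA 1 m) :
    ∃ a b : Idx d, m.rows \ m.cols = {a} ∧ m.cols \ m.rows = {b} ∧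
      phiW K d (sdet K d m) =
        (-1 : MvPolynomial (Idx d) K) ^ (delta m + 1) * (xd K d ^ 2 * (X a * X b)) := by
  obtain ⟨x, hx⟩ := Finset.card_eq_one.mp h
  have hxr : x ∈ m.rows := (Finset.mem_inter.mp (hx ▸ Finset.mem_singleton_self x)).1
  have hxc : x ∈ m.cols := (Finset.mem_inter.mp (hx ▸ Finset.mem_singleton_self x)).2
  have huniq : ∀ y, y ∈ m.rows → y ∈ m.cols → y = x := fun y hy hy' =>
    Finset.mem_singleton.mp (hx ▸ Finset.mem_inter.mpr ⟨hy, hy'⟩)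
  have hr12 : m.r1 ≠ m.r2 := ne_of_lt m.hr
  have hc12 : m.c1 ≠ m.c2 := ne_of_lt m.hc
  simp only [Sub2.rows, Sub2.cols, Finset.mem_insert, Finset.mem_singleton] at hxr hxc
  rcases hxr with hxr | hxr <;> rcases hxc with hxc | hxc
  · -- x = r1 = c1
    have e : m.c1 = m.r1 := hxc.symm.trans hxr
    have n1 : m.r2 ≠ m.c2 := fun hE =>
      hr12 ((huniq m.r2 (by simp [Sub2.rows]) (by simp [Sub2.cols, hE])).trans hxr).symm
    have n2 : m.r1 ≠ m.c2 := fun hE => hc12 (e.trans hE)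
    have n3 : m.r2 ≠ m.c1 := fun hE => hr12 (hE.trans e).symm
    have hδ : delta m = 0 := by simp [delta, e.symm]
    refine ⟨m.r2, m.c2, ?_, ?_, ?_⟩
    · ext y
      simp only [Sub2.rows, Sub2.cols, Finset.mem_sdiff, Finset.mem_insert,
        Finset.mem_singleton]
      constructor
      · rintro ⟨hy1 | hy1, hy2⟩
        · exact absurd (Or.inl (hy1.trans e.symm)) hy2
        · exact hy1
      · rintro rfl; exact ⟨Or.inr rfl, by rintro (hE | hE); exacts [n3 hE, n1 hE]⟩
    · ext y
      simp only [Sub2.rows, Sub2.cols, Finset.mem_sdiff, Finset.mem_insert,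
        Finset.mem_singleton]
      constructor
      · rintro ⟨hy1 | hy1, hy2⟩
        · exact absurd (Or.inl (hy1.trans e)) hy2
        · exact hy1
      · rintro rfl; exact ⟨Or.inr rfl, by rintro (hE | hE); exacts [n2 hE.symm, n1 hE.symm]⟩
    · rw [phi_sdet, hδ, e, gq_diag, gq_ne n1, gq_ne n2,
        gq_ne (show m.r2 ≠ m.r1 from hr12.symm)]
      ring
  · -- x = r1 = c2
    have e : m.c2 = m.r1 := hxc.symm.trans hxr
    have n1 : m.r1 ≠ m.c1 := fun hE => hc12 (hE.symm.trans e.symm)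
    have n2 : m.r2 ≠ m.c2 := fun hE => hr12 (hE.trans e).symm
    have n3 : m.r2 ≠ m.c1 := fun hE =>
      hr12 ((huniq m.r2 (by simp [Sub2.rows]) (by simp [Sub2.cols, hE])).trans hxr).symm
    have hδ : delta m = 1 := by simp [delta, n1, n2]
    refine ⟨m.r2, m.c1, ?_, ?_, ?_⟩
    · ext y
      simp only [Sub2.rows, Sub2.cols, Finset.mem_sdiff, Finset.mem_insert,
        Finset.mem_singleton]
      constructor
      · rintro ⟨hy1 | hy1, hy2⟩
        · exact absurd (Or.inr (hy1.trans e.symm)) hy2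
        · exact hy1
      · rintro rfl; exact ⟨Or.inr rfl, by rintro (hE | hE); exacts [n3 hE, n2 hE]⟩
    · ext y
      simp only [Sub2.rows, Sub2.cols, Finset.mem_sdiff, Finset.mem_insert,
        Finset.mem_singleton]
      constructor
      · rintro ⟨hy1 | hy1, hy2⟩
        · exact hy1
        · exact absurd (Or.inl (hy1.trans e)) hy2
      · rintro rfl; exact ⟨Or.inl rfl, by rintro (hE | hE); exacts [n1 hE.symm, n3 hE.symm]⟩
    · rw [phi_sdet, hδ, e, gq_diag, gq_ne n1, gq_ne n3,
        gq_ne (show m.r2 ≠ m.r1 from hr12.symm)]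
      ring
  · -- x = r2 = c1
    have e : m.c1 = m.r2 := hxc.symm.trans hxr
    have n1 : m.r1 ≠ m.c1 := fun hE => hr12 (hE.trans e)
    have n2 : m.r1 ≠ m.c2 := fun hE =>
      hr12 (huniq m.r1 (by simp [Sub2.rows]) (by simp [Sub2.cols, hE]) |>.trans hxr)
    have n3 : m.r2 ≠ m.c2 := fun hE => hc12 (e.trans hE)
    have hδ : delta m = 1 := by simp [delta, n1, n3]
    refine ⟨m.r1, m.c2, ?_, ?_, ?_⟩
    · ext y
      simp only [Sub2.rows, Sub2.cols, Finset.mem_sdiff, Finset.mem_insert,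
        Finset.mem_singleton]
      constructor
      · rintro ⟨hy1 | hy1, hy2⟩
        · exact hy1
        · exact absurd (Or.inl (hy1.trans e.symm)) hy2
      · rintro rfl; exact ⟨Or.inl rfl, by rintro (hE | hE); exacts [n1 hE, n2 hE]⟩
    · ext y
      simp only [Sub2.rows, Sub2.cols, Finset.mem_sdiff, Finset.mem_insert,
        Finset.mem_singleton]
      constructor
      · rintro ⟨hy1 | hy1, hy2⟩
        · exact absurd (Or.inr (hy1.trans e)) hy2
        · exact hy1
      · rintro rfl; exact ⟨Or.inr rfl, by rintro (hE | hE); exacts [n2 hE.symm, n3 hE.symm]⟩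
    · rw [phi_sdet, hδ, e, gq_diag, gq_ne n2, gq_ne n3,
        gq_ne (show m.r1 ≠ m.r2 from hr12)]
      ring
  · -- x = r2 = c2
    have e : m.c2 = m.r2 := hxc.symm.trans hxr
    have n1 : m.r1 ≠ m.c1 := fun hE =>
      hr12 (huniq m.r1 (by simp [Sub2.rows]) (by simp [Sub2.cols, hE]) |>.trans hxr)
    have n2 : m.r1 ≠ m.c2 := fun hE => hr12 (hE.trans e)
    have n3 : m.r2 ≠ m.c1 := fun hE => hc12 (hE.symm.trans e.symm)
    have hδ : delta m = 0 := by simp [delta, e.symm]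
    refine ⟨m.r1, m.c1, ?_, ?_, ?_⟩
    · ext y
      simp only [Sub2.rows, Sub2.cols, Finset.mem_sdiff, Finset.mem_insert,
        Finset.mem_singleton]
      constructor
      · rintro ⟨hy1 | hy1, hy2⟩
        · exact hy1
        · exact absurd (Or.inr (hy1.trans e.symm)) hy2
      · rintro rfl; exact ⟨Or.inl rfl, by rintro (hE | hE); exacts [n1 hE, n2 hE]⟩
    · ext y
      simp only [Sub2.rows, Sub2.cols, Finset.mem_sdiff, Finset.mem_insert,
        Finset.mem_singleton]
      constructor
      · rintro ⟨hy1 | hy1, hy2⟩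
        · exact hy1
        · exact absurd (Or.inr (hy1.trans e)) hy2
      · rintro rfl; exact ⟨Or.inl rfl, by rintro (hE | hE); exacts [n1 hE.symm, n3 hE.symm]⟩
    · rw [phi_sdet, hδ, e, gq_diag, gq_ne n1, gq_ne n3,
        gq_ne (show m.r1 ≠ m.r2 from hr12)]
      ring

lemma rows_card (m : Sub2 d) : m.rows.card = 2 := by
  rw [Sub2.rows, Finset.card_pair (ne_of_lt m.hr)]

lemma cols_card (m : Sub2 d) : m.cols.card = 2 := by
  rw [Sub2.cols, Finset.card_pair (ne_of_lt m.hc)]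

lemma sub2_compl_sdiff (m n : Sub2 d) (hc : ComplSub2 m n) :
    n.rows \ n.cols = m.cols \ m.rows ∧ n.cols \ n.rows = m.rows \ m.cols := by
  obtain ⟨S, hS, hrS, hcS, hdr, hdc⟩ := hc
  have hrU : m.rows ∪ n.rows = S :=
    Finset.eq_of_subset_of_card_le hrS
      (by rw [hS, Finset.card_union_of_disjoint hdr, rows_card, rows_card])
  have hcU : m.cols ∪ n.cols = S :=
    Finset.eq_of_subset_of_card_le hcS
      (by rw [hS, Finset.card_union_of_disjoint hdc, cols_card, cols_card])
  have hnr : n.rows = S \ m.rows := by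
    rw [← hrU, Finset.union_sdiff_cancel_left hdr]
  have hnc : n.cols = S \ m.cols := by
    rw [← hcU, Finset.union_sdiff_cancel_left hdc]
  have hmrS : m.rows ⊆ S := hrU ▸ Finset.subset_union_left
  have hmcS : m.cols ⊆ S := hcU ▸ Finset.subset_union_left
  constructor
  · ext y
    simp only [hnr, hnc, Finset.mem_sdiff, not_and, not_not]
    constructor
    · rintro ⟨⟨hyS, hyr⟩, h2⟩; exact ⟨h2 hyS, hyr⟩
    · rintro ⟨hyc, hyr⟩; exact ⟨⟨hmcS hyc, hyr⟩, fun _ => hyc⟩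
  · ext y
    simp only [hnr, hnc, Finset.mem_sdiff, not_and, not_not]
    constructor
    · rintro ⟨⟨hyS, hyc⟩, h2⟩; exact ⟨h2 hyS, hyc⟩
    · rintro ⟨hyr, hyc⟩; exact ⟨⟨hmrS hyr, hyc⟩, fun _ => hyr⟩

lemma delta_cases (m : Sub2 d) : delta m = 0 ∨ delta m = 1 := by
  unfold delta; split <;> simp

end Aux

/-- For every complementary pair `det m, det n ∈ A₁`, the element
`det m - (-1)^(δ m + δ n) det n` lies in `ker φ_W`; i.e. `Λ₁ ⊆ I(X)`. -/
theorem Lam1_le_fiber_ideal (K : Type*) [Field K] [CharZero K] (d : ℕ) (hd : 4 ≤ d) :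
    Lam1 K d ≤ IX K d := by
  rw [Lam1, Ideal.span_le]
  rintro f ⟨m, n, hm, hn, hc, rfl⟩
  obtain ⟨a, b, hma, hmb, hφm⟩ := A1_struct (K := K) m hm
  obtain ⟨a', b', hna, hnb, hφn⟩ := A1_struct (K := K) n hn
  obtain ⟨h1, h2⟩ := sub2_compl_sdiff m n hc
  have ha' : a' = b := by
    have : ({a'} : Finset (Idx d)) = {b} := hna.symm.trans (h1.trans hmb)
    exact Finset.singleton_injective this
  have hb' : b' = a := by
    have : ({b'} : Finset (Idx d)) = {a} := hnb.symm.trans (h2.trans hma)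
    exact Finset.singleton_injective this
  simp only [SetLike.mem_coe, IX, RingHom.mem_ker, AlgHom.toRingHom_eq_coe, RingHom.coe_coe,
    map_sub, map_mul, map_pow, map_neg, map_one, hφm, hφn, ha', hb']
  rcases delta_cases m with h | h <;> rcases delta_cases n with h' | h' <;>
    rw [h, h'] <;> ring
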